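/- Suppose $f : \mathbb{R}^d \to \mathbb{R}$ is $m$-strongly convex and $L$-smooth with $0 < m \leq L$, and let $\bar{x}$ be a random vector with density proportional to $\exp(-f(x))$. Then $\mathbb{E}(\|\nabla f(\bar{x})\|^2) \leq L d$. -/

import Mathlib

open MeasureTheory Real
open scoped ENNReal NNReal

lemma gauss_int {d : ℕ} (a b : ℝ) (hb : 0 < b) :
    Integrable (fun x : EuclideanSpace ℝ (Fin d) => Real.exp (a * ‖x‖ - b * ‖x‖^2)) := by
  have h1 : Integrable (fun v : EuclideanSpace ℝ (Fin d) =>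
      Complex.exp (-(b/2 : ℂ) * ‖v‖^2 + 0 * (inner ℝ (0 : EuclideanSpace ℝ (Fin d)) v : ℝ))) :=
    GaussianFourier.integrable_cexp_neg_mul_sq_norm_add_of_euclideanSpace (by simp [hb]) 0 0
  have h2 : Integrable (fun v : EuclideanSpace ℝ (Fin d) => Real.exp (a^2/(2*b)) *
      Real.exp (-(b/2) * ‖v‖^2)) := by
    refine (h1.norm.congr ?_).const_mul _
    filter_upwards with v
    rw [show (-(b/2 : ℂ) * ‖v‖^2 + 0 * ((inner ℝ (0 : EuclideanSpace ℝ (Fin d)) v : ℝ) : ℂ))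
        = ((-(b/2) * ‖v‖^2 : ℝ) : ℂ) by push_cast; ring]
    rw [Complex.norm_exp, Complex.ofReal_re]
  refine h2.mono' ?_ ?_
  · exact (Real.continuous_exp.comp (by continuity)).aestronglyMeasurable
  · filter_upwards with v
    rw [Real.norm_eq_abs, abs_of_pos (Real.exp_pos _), ← Real.exp_add]
    apply Real.exp_le_exp.2
    rw [← sub_nonneg]
    have h0 : a^2/(2*b) + -(b/2)*‖v‖^2 - (a*‖v‖ - b*‖v‖^2) = (a - b*‖v‖)^2 / (2*b) := by
      field_simp; ring
    rw [h0]; positivity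


lemma int_dom {d : ℕ} {h : EuclideanSpace ℝ (Fin d) → ℝ} (hc : Continuous h)
    (C a b : ℝ) (hb : 0 < b) (hle : ∀ x, |h x| ≤ C * Real.exp (a * ‖x‖ - b * ‖x‖^2)) :
    Integrable h := by
  refine ((gauss_int a b hb).const_mul C).mono' hc.aestronglyMeasurable ?_
  filter_upwards with x
  rw [Real.norm_eq_abs]
  exact hle x

theorem stmt_18 {d : ℕ} (f : EuclideanSpace ℝ (Fin d) → ℝ) (hf : ContDiff ℝ 2 f)
    (m L : ℝ) (hm : 0 < m) (hmL : m ≤ L)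
    (hconv : ∀ x y, f x + (inner ℝ (gradient f x) (y - x) : ℝ) + m/2 * ‖x - y‖^2 ≤ f y)
    (hsmooth : ∀ x y, ‖gradient f x - gradient f y‖ ≤ L * ‖x - y‖)
    (Z : ℝ) (hZ : Z = ∫ x : EuclideanSpace ℝ (Fin d), Real.exp (-f x))
    (gibbs : Measure (EuclideanSpace ℝ (Fin d)))
    (hgibbs : gibbs = volume.withDensity fun x => ENNReal.ofReal (Real.exp (-f x) / Z)) :
    ∫ x, ‖gradient f x‖^2 ∂gibbs ≤ L * d := by
  have hL : 0 < L := hm.trans_le hmL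
  have hfd : Differentiable ℝ f := hf.differentiable two_ne_zero
  set g : EuclideanSpace ℝ (Fin d) → ℝ := fun x => Real.exp (-f x) with hgdef
  set e : Fin d → EuclideanSpace ℝ (Fin d) := fun i => EuclideanSpace.single i 1 with hedef
  set u : Fin d → EuclideanSpace ℝ (Fin d) → ℝ := fun i x => fderiv ℝ f x (e i) with hudef
  set A : ℝ := ‖gradient f 0‖ with hAdef
  have hA : 0 ≤ A := norm_nonneg _
  have hnorme : ∀ i, ‖e i‖ = 1 := by
    intro i; rw [hedef]; rw [EuclideanSpace.norm_single]; exact norm_one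
  -- gradient vs fderiv
  have hgradf : ∀ (x v : EuclideanSpace ℝ (Fin d)), (inner ℝ (gradient f x) v : ℝ) = fderiv ℝ f x v := by
    intro x v
    exact InnerProductSpace.toDual_symm_apply
  -- gradient norm bound
  have hgbound : ∀ x, ‖gradient f x‖ ≤ A + L * ‖x‖ := by
    intro x
    have h1 := hsmooth x 0
    have h2 := norm_sub_norm_le (gradient f x) (gradient f 0)
    simp only [sub_zero] at h1
    linarith
  -- pointwise bound on u
  have hub : ∀ (i : Fin d) x, |u i x| ≤ ‖gradient f x‖ := by
    intro i x
    rw [hudef]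
    simp only
    rw [← hgradf]
    calc |(inner ℝ (gradient f x) (e i) : ℝ)| ≤ ‖gradient f x‖ * ‖e i‖ :=
          abs_real_inner_le_norm _ _
      _ = ‖gradient f x‖ := by rw [hnorme i, mul_one]
  -- g bound
  have hgpos : ∀ x, 0 < g x := fun x => Real.exp_pos _
  have hgle : ∀ x, g x ≤ Real.exp (-f 0) * Real.exp (A * ‖x‖ - (m/2) * ‖x‖^2) := by
    intro x
    rw [← Real.exp_add]
    apply Real.exp_le_exp.2
    have h1 := hconv 0 x
    have h2 : -(A * ‖x‖) ≤ (inner ℝ (gradient f 0) (x - 0) : ℝ) := by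
      rw [sub_zero]
      have h4 := abs_real_inner_le_norm (gradient f 0) x
      have h5 := neg_abs_le (inner ℝ (gradient f 0) x : ℝ)
      rw [abs_le] at h4
      linarith [h4.1]
    have h3 : ‖(0 : EuclideanSpace ℝ (Fin d)) - x‖ = ‖x‖ := by simp
    rw [h3] at h1
    nlinarith
  -- smoothness of u i
  have hDfe : ContDiff ℝ 1 (fderiv ℝ f) := hf.fderiv_right (le_refl 2)
  have hui : ∀ i, ContDiff ℝ 1 (u i) := fun i =>
    (ContinuousLinearMap.apply ℝ ℝ (e i)).contDiff.comp hDfe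
  -- second derivative bound
  have hD2 : ∀ (i : Fin d) x, |fderiv ℝ (u i) x (e i)| ≤ L := by
    intro i x
    have hlip : LipschitzWith L.toNNReal (u i) := by
      apply LipschitzWith.of_dist_le_mul
      intro p q
      rw [Real.dist_eq, Real.coe_toNNReal _ hL.le]
      have heq : u i p - u i q = (inner ℝ (gradient f p - gradient f q) (e i) : ℝ) := by
        rw [inner_sub_left, hgradf, hgradf]
      rw [heq]
      calc |(inner ℝ (gradient f p - gradient f q) (e i) : ℝ)|
          ≤ ‖gradient f p - gradient f q‖ * ‖e i‖ := abs_real_inner_le_norm _ _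
        _ = ‖gradient f p - gradient f q‖ := by rw [hnorme i, mul_one]
        _ ≤ L * ‖p - q‖ := hsmooth p q
        _ = L * dist p q := by rw [dist_eq_norm]
    have hnd : ‖fderiv ℝ (u i) x‖ ≤ L := by
      have := HasFDerivAt.le_of_lipschitz ((hui i).differentiable one_ne_zero x).hasFDerivAt hlip
      rwa [Real.coe_toNNReal _ hL.le] at this
    calc |fderiv ℝ (u i) x (e i)| = ‖fderiv ℝ (u i) x (e i)‖ := rfl
      _ ≤ ‖fderiv ℝ (u i) x‖ * ‖e i‖ := (fderiv ℝ (u i) x).le_opNorm _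
      _ ≤ L * 1 := mul_le_mul hnd (le_of_eq (hnorme i)) (norm_nonneg _) hL.le
      _ = L := mul_one L
  -- derivative of g
  have hgderiv : ∀ x, HasFDerivAt g ((-g x) • fderiv ℝ f x) x := by
    intro x
    have h1 : HasFDerivAt (fun y => -f y) (-fderiv ℝ f x) x := (hfd x).hasFDerivAt.neg
    have h2 := (Real.hasDerivAt_exp (-f x)).comp_hasFDerivAt x h1
    rw [show (-g x) • fderiv ℝ f x = Real.exp (-f x) • -fderiv ℝ f x by rw [smul_neg, neg_smul]]
    exact h2
  have hgdiff : Differentiable ℝ g := fun x => (hgderiv x).differentiableAt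
  have hgfd : ∀ x, fderiv ℝ g x = (-g x) • fderiv ℝ f x := fun x => (hgderiv x).fderiv
  -- continuity
  have hgcont : Continuous g := Real.continuous_exp.comp (hf.continuous.neg)
  have huicont : ∀ i, Continuous (u i) := fun i => (hui i).continuous
  -- integrability
  have hIg : Integrable g := by
    apply int_dom hgcont (Real.exp (-f 0)) A (m/2) (by linarith)
    intro x
    rw [abs_of_pos (hgpos x)]
    exact hgle x
  have habs : ∀ t : ℝ, 0 ≤ t → A + L * t ≤ (A + L) * Real.exp t := by
    intro t ht
    have h1 : 1 ≤ Real.exp t := Real.one_le_exp ht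
    have h2 : t ≤ Real.exp t := by linarith [Real.add_one_le_exp t]
    nlinarith
  have hIuig : ∀ i, Integrable (fun x => u i x * g x) := by
    intro i
    apply int_dom ((huicont i).mul hgcont) ((A + L) * Real.exp (-f 0)) (A + 1) (m/2)
      (by linarith)
    intro x
    rw [Pi.mul_apply, abs_mul, abs_of_pos (hgpos x)]
    calc |u i x| * g x ≤ ((A + L) * Real.exp ‖x‖) *
          (Real.exp (-f 0) * Real.exp (A * ‖x‖ - m/2 * ‖x‖^2)) := by
          apply mul_le_mul _ (hgle x) (hgpos x).le (by positivity)
          exact ((hub i x).trans (hgbound x)).trans (habs _ (norm_nonneg x))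
      _ = (A + L) * Real.exp (-f 0) * (Real.exp ‖x‖ * Real.exp (A * ‖x‖ - m/2 * ‖x‖^2)) := by
          ring
      _ = (A + L) * Real.exp (-f 0) * Real.exp ((A+1) * ‖x‖ - m/2 * ‖x‖^2) := by
          rw [← Real.exp_add, show ‖x‖ + (A * ‖x‖ - m/2 * ‖x‖^2)
            = (A+1) * ‖x‖ - m/2 * ‖x‖^2 from by ring]
  have hIuuig : ∀ i, Integrable (fun x => u i x ^ 2 * g x) := by
    intro i
    apply int_dom (((huicont i).pow 2).mul hgcont) ((A + L)^2 * Real.exp (-f 0)) (A + 2) (m/2)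
      (by linarith)
    intro x
    rw [Pi.mul_apply, Pi.pow_apply, abs_mul, abs_of_pos (hgpos x), abs_pow]
    have hb1 : |u i x| ≤ (A + L) * Real.exp ‖x‖ :=
      ((hub i x).trans (hgbound x)).trans (habs _ (norm_nonneg x))
    calc |u i x|^2 * g x ≤ (((A + L) * Real.exp ‖x‖)^2) *
          (Real.exp (-f 0) * Real.exp (A * ‖x‖ - m/2 * ‖x‖^2)) := by
          apply mul_le_mul _ (hgle x) (hgpos x).le (by positivity)
          have h0 : 0 ≤ |u i x| := abs_nonneg _
          nlinarith
      _ = (A + L)^2 * Real.exp (-f 0) * (Real.exp ‖x‖ * (Real.exp ‖x‖ *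
            Real.exp (A * ‖x‖ - m/2 * ‖x‖^2))) := by
          ring
      _ = (A + L)^2 * Real.exp (-f 0) * Real.exp ((A+2) * ‖x‖ - m/2 * ‖x‖^2) := by
          rw [← Real.exp_add, ← Real.exp_add, show ‖x‖ + (‖x‖ + (A * ‖x‖ - m/2 * ‖x‖^2))
            = (A+2) * ‖x‖ - m/2 * ‖x‖^2 from by ring]
  have hIDug : ∀ i, Integrable (fun x => fderiv ℝ (u i) x (e i) * g x) := by
    intro i
    have hcont : Continuous fun x => fderiv ℝ (u i) x (e i) := by
      have h1 := ((hui i).fderiv_right (le_of_eq (zero_add 1))).continuous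
      exact ((ContinuousLinearMap.apply ℝ ℝ (e i)).continuous).comp h1
    apply int_dom (hcont.mul hgcont) (L * Real.exp (-f 0)) A (m/2) (by linarith)
    intro x
    rw [Pi.mul_apply, abs_mul, abs_of_pos (hgpos x)]
    calc |fderiv ℝ (u i) x (e i)| * g x ≤ L * (Real.exp (-f 0) *
          Real.exp (A * ‖x‖ - m/2 * ‖x‖^2)) :=
          mul_le_mul (hD2 i x) (hgle x) (hgpos x).le hL.le
      _ = L * Real.exp (-f 0) * Real.exp (A * ‖x‖ - m/2 * ‖x‖^2) := by ring
  -- integration by parts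
  have key : ∀ i, ∫ x, u i x ^ 2 * g x = ∫ x, fderiv ℝ (u i) x (e i) * g x := by
    intro i
    have hfg' : (fun x => u i x * fderiv ℝ g x (e i)) = fun x => -(u i x ^ 2 * g x) := by
      funext x
      rw [hgfd x]
      simp only [ContinuousLinearMap.coe_smul', Pi.smul_apply, smul_eq_mul]
      ring
    have h := integral_mul_fderiv_eq_neg_fderiv_mul_of_integrable
      (μ := (volume : Measure (EuclideanSpace ℝ (Fin d)))) (f := u i) (g := g) (v := e i)
      (hIDug i) (by rw [hfg']; exact (hIuuig i).neg) (hIuig i)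
      (fun x _ => (hui i).differentiable one_ne_zero x) (fun x _ => hgdiff x)
    rw [hfg', integral_neg] at h
    have h2 := neg_injective h
    linarith [h2]
  -- sum of squares
  have hnorm : ∀ x, ‖gradient f x‖^2 = ∑ i, u i x ^ 2 := by
    intro x
    have h1 : ‖gradient f x‖^2 = ∑ i, (gradient f x i)^2 := by
      rw [EuclideanSpace.norm_eq, Real.sq_sqrt (by positivity)]
      simp [sq_abs]
    rw [h1]
    congr 1
    funext i
    congr 1
    rw [hudef]
    simp only
    rw [← hgradf, hedef]
    simp only
    rw [EuclideanSpace.inner_single_right]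
    simp
  -- Z positive
  have hZpos : 0 < Z := by
    rw [hZ, integral_pos_iff_support_of_nonneg (fun x => (Real.exp_pos _).le) hIg]
    have hsupp : (Function.support fun x : EuclideanSpace ℝ (Fin d) => Real.exp (-f x))
        = Set.univ := by
      ext x; simp [Function.support, (Real.exp_pos (-f x)).ne']
    rw [hsupp]
    exact isOpen_univ.measure_pos volume ⟨0, trivial⟩
  -- final computation
  have hmeas : Measurable fun x => (g x / Z).toNNReal :=
    (hgcont.div_const Z).measurable.real_toNNReal
  rw [hgibbs]
  have hden : (fun x : EuclideanSpace ℝ (Fin d) => ENNReal.ofReal (Real.exp (-f x) / Z))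
      = fun x => ((fun y => (g y / Z).toNNReal) x : ℝ≥0∞) := rfl
  rw [hden, integral_withDensity_eq_integral_smul hmeas]
  have hptw : (fun x => ((g x / Z).toNNReal : ℝ≥0) • ‖gradient f x‖^2)
      = fun x => (1/Z) * (‖gradient f x‖^2 * g x) := by
    funext x
    rw [NNReal.smul_def, Real.coe_toNNReal _ (div_nonneg (hgpos x).le hZpos.le),
      smul_eq_mul]
    ring
  rw [hptw, integral_const_mul]
  have hsum : ∫ x, ‖gradient f x‖^2 * g x = ∑ i, ∫ x, u i x^2 * g x := by
    rw [← integral_finset_sum _ (fun i _ => hIuuig i)]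
    congr 1
    funext x
    rw [hnorm x, Finset.sum_mul]
  have hbound : ∀ i, ∫ x, u i x^2 * g x ≤ L * Z := by
    intro i
    rw [key i]
    calc ∫ x, fderiv ℝ (u i) x (e i) * g x ≤ ∫ x, L * g x := by
          apply integral_mono (hIDug i) (hIg.const_mul L)
          intro x
          dsimp only
          nlinarith [(abs_le.1 (hD2 i x)).2, (hgpos x).le]
      _ = L * Z := by rw [integral_const_mul, hZ]
  have hItot : ∫ x, ‖gradient f x‖^2 * g x ≤ L * d * Z := by
    rw [hsum]
    calc ∑ i, ∫ x, u i x^2*g x ≤ ∑ _i : Fin d, L * Z :=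
          Finset.sum_le_sum (fun i _ => hbound i)
      _ = d * (L*Z) := by rw [Finset.sum_const, Finset.card_univ, Fintype.card_fin,
            nsmul_eq_mul]
      _ = L * d * Z := by ring
  calc 1/Z * ∫ x, ‖gradient f x‖^2 * g x ≤ 1/Z * (L * d * Z) := by
        apply mul_le_mul_of_nonneg_left hItot (by positivity)
    _ = L * d := by field_simp
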